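/- Let M₀ and M₁ be the 3×3 rotation matrices M_k = [[cos ρ_k, sin ρ_k cos θ_k, sin ρ_k sin θ_k], [-sin ρ_k cos θ_k, cos ρ_k cos²θ_k + sin²θ_k, (cos ρ_k - 1) cos θ_k sin θ_k], [-sin ρ_k sin θ_k, (cos ρ_k - 1) cos θ_k sin θ_k, cos ρ_k sin²θ_k + cos²θ_k]] for k = 0, 1. Then trace(M₁ M₀) = -1 + 4 sin²(ρ₀/2) sin²(ρ₁/2) (cos(θ₀ - θ₁) - cot(ρ₀/2) cot(ρ₁/2))². -/

import Mathlib

open Real Matrix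

/-- The rotation matrix `M_k` determined by the angles `ρ` and `θ`. -/
noncomputable def Mrot (ρ θ : ℝ) : Matrix (Fin 3) (Fin 3) ℝ :=
  !![Real.cos ρ, Real.sin ρ * Real.cos θ, Real.sin ρ * Real.sin θ;
     -Real.sin ρ * Real.cos θ, Real.cos ρ * Real.cos θ ^ 2 + Real.sin θ ^ 2,
       (Real.cos ρ - 1) * Real.cos θ * Real.sin θ;
     -Real.sin ρ * Real.sin θ, (Real.cos ρ - 1) * Real.cos θ * Real.sin θ,
       Real.cos ρ * Real.sin θ ^ 2 + Real.cos θ ^ 2]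

/-- the trace of `M₁ M₀` equals
`-1 + 4 sin²(ρ₀/2) sin²(ρ₁/2)(cos(θ₀-θ₁) - cot(ρ₀/2)cot(ρ₁/2))²`. -/
theorem trace_M1_M0 (ρ₀ ρ₁ θ₀ θ₁ : ℝ)
    (h₀ : Real.sin (ρ₀ / 2) ≠ 0) (h₁ : Real.sin (ρ₁ / 2) ≠ 0) :
    Matrix.trace (Mrot ρ₁ θ₁ * Mrot ρ₀ θ₀)
      = -1 + 4 * Real.sin (ρ₀ / 2) ^ 2 * Real.sin (ρ₁ / 2) ^ 2
          * (Real.cos (θ₀ - θ₁) - Real.cot (ρ₀ / 2) * Real.cot (ρ₁ / 2)) ^ 2 := by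
  have e0 : ρ₀ = 2 * (ρ₀ / 2) := by ring
  have e1 : ρ₁ = 2 * (ρ₁ / 2) := by ring
  rw [Mrot, Mrot, Matrix.trace_fin_three]
  simp only [Matrix.mul_apply, Fin.sum_univ_three, Matrix.of_apply, Matrix.cons_val',
    Matrix.cons_val_zero, Matrix.cons_val_one, Matrix.head_cons, Matrix.empty_val',
    Matrix.cons_val_fin_one, Matrix.head_fin_const, Matrix.cons_val_two, Matrix.tail_cons]
  rw [Real.cos_sub, Real.cot_eq_cos_div_sin, Real.cot_eq_cos_div_sin]
  rw [e0, e1, Real.cos_two_mul, Real.sin_two_mul, Real.cos_two_mul, Real.sin_two_mul]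
  have p0 := Real.sin_sq_add_cos_sq (ρ₀ / 2)
  have p1 := Real.sin_sq_add_cos_sq (ρ₁ / 2)
  have q0 := Real.sin_sq_add_cos_sq θ₀
  have q1 := Real.sin_sq_add_cos_sq θ₁
  field_simp
  apply mul_left_cancel₀ (show (Real.sin (ρ₀/2) * Real.sin (ρ₁/2))^2 ≠ 0 by positivity)
  linear_combination
    (- 2*(Real.sin (ρ₀/2))^2*(Real.sin (ρ₁/2))^2 - 2*(Real.sin (ρ₀/2))^2*(Real.sin (ρ₁/2))^2*(Real.cos θ₀)^2*(Real.cos θ₁)^2 + 2*(Real.sin (ρ₀/2))^2*(Real.sin (ρ₁/2))^2*(Real.cos θ₀)^2*(Real.sin θ₁)^2 - 8*(Real.sin (ρ₀/2))^2*(Real.sin (ρ₁/2))^2*(Real.sin θ₀)*(Real.cos θ₀)*(Real.sin θ₁)*(Real.cos θ₁) + 2*(Real.sin (ρ₀/2))^2*(Real.sin (ρ₁/2))^2*(Real.sin θ₀)^2*(Real.cos θ₁)^2 - 2*(Real.sin (ρ₀/2))^2*(Real.sin (ρ₁/2))^2*(Real.sin θ₀)^2*(Real.sin θ₁)^2 +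 4*(Real.sin (ρ₀/2))^2*(Real.sin (ρ₁/2))^2*(Real.cos (ρ₁/2))^2*(Real.cos θ₀)^2*(Real.cos θ₁)^2 + 8*(Real.sin (ρ₀/2))^2*(Real.sin (ρ₁/2))^2*(Real.cos (ρ₁/2))^2*(Real.sin θ₀)*(Real.cos θ₀)*(Real.sin θ₁)*(Real.cos θ₁) + 4*(Real.sin (ρ₀/2))^2*(Real.sin (ρ₁/2))^2*(Real.cos (ρ₁/2))^2*(Real.sin θ₀)^2*(Real.sin θ₁)^2) * p0 +
    (- 2*(Real.sin (ρ₀/2))^2*(Real.sin (ρ₁/2))^2 + 2*(Real.sin (ρ₀/2))^2*(Real.sin (ρ₁/2))^2*(Real.cos θ₀)^2*(Real.cos θ₁)^2 + 2*(Real.sin (ρ₀/2))^2*(Real.sin (ρ₁/2))^2*(Real.cos θ₀)^2*(Real.sin θ₁)^2 + 2*(Real.sin (ρ₀/2))^2*(Real.sin (ρ₁/2))^2*(Real.sin θ₀)^2*(Real.cos θ₁)^2 + 2*(Real.sin (ρ₀/2))^2*(Real.sin (ρ₁/2))^2*(Real.sin θ₀)^2*(Real.sin θ₁)^2 - 4*(Real.sin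 (ρ₀/2))^4*(Real.sin (ρ₁/2))^2*(Real.cos θ₀)^2*(Real.cos θ₁)^2 - 8*(Real.sin (ρ₀/2))^4*(Real.sin (ρ₁/2))^2*(Real.sin θ₀)*(Real.cos θ₀)*(Real.sin θ₁)*(Real.cos θ₁) - 4*(Real.sin (ρ₀/2))^4*(Real.sin (ρ₁/2))^2*(Real.sin θ₀)^2*(Real.sin θ₁)^2) * p1 +
    (2*(Real.sin (ρ₀/2))^2*(Real.sin (ρ₁/2))^2*(Real.cos θ₁)^2 + 2*(Real.sin (ρ₀/2))^2*(Real.sin (ρ₁/2))^2*(Real.sin θ₁)^2 - 2*(Real.sin (ρ₀/2))^2*(Real.sin (ρ₁/2))^4*(Real.cos θ₁)^2 - 2*(Real.sin (ρ₀/2))^2*(Real.sin (ρ₁/2))^4*(Real.sin θ₁)^2 - 2*(Real.sin (ρ₀/2))^4*(Real.sin (ρ₁/2))^2*(Real.cos θ₁)^2 - 2*(Real.sin (ρ₀/2))^4*(Real.sin (ρ₁/2))^2*(Real.sin θ₁)^2) * q0 +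
    (2*(Real.sin (ρ₀/2))^2*(Real.sin (ρ₁/2))^2 - 2*(Real.sin (ρ₀/2))^2*(Real.sin (ρ₁/2))^4 - 2*(Real.sin (ρ₀/2))^4*(Real.sin (ρ₁/2))^2) * q1
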